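/- arXiv:2502.16977 — 7 statements merged into one kernel-verified Lean document; each statement's English description precedes it below -/
import Mathlib

section
/- Let d, n, p ≥ 1, let x_1, …, x_n ∈ ℝ^d and y_1, …, y_n ∈ ℝ, and let a_j : [0,∞) → ℝ and w_j : [0,∞) → ℝ^d (j = 1, …, p) be differentiable curves satisfying the gradient-flow equations w_j'(t) = (a_j(t)/n) · Σ_{i=1}^n r_i(t) x_i 𝟙[⟨w_j(t), x_i⟩ > 0] and a_j'(t) = (1/n) · Σ_{i=1}^n r_i(t) max(⟨w_j(t), x_i⟩, 0), where r_i(t) = y_i − (1/p) Σ_{k=1}^p a_k(t) max(⟨w_k(t), x_i⟩, 0). Then for every j and every t ≥ 0 one has a_j(t)² − ‖w_j(t)‖² = a_j(0)² − ‖w_j(0)‖². Moreover, if |a_j(0)| ≥ ‖w_j(0)‖, then for all t ≥ 0 one has a_j(0)·a_j(t) ≥ 0 (a_j never changes sign) and |a_j(t)| ≥ ‖w_j(t)‖. -/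
open scoped RealInnerProductSpace

/-- Along the gradient flow of the square loss of a one-hidden-layer
ReLU network, the balance `a_j(t)² - ‖w_j(t)‖²` is conserved; moreover if
`|a_j(0)| ≥ ‖w_j(0)‖` then `a_j` never changes sign and `|a_j(t)| ≥ ‖w_j(t)‖`. -/
theorem balance_invariant_of_gradient_flow
    (d n p : ℕ) (hd : 1 ≤ d) (hn : 1 ≤ n) (hp : 1 ≤ p)
    (x : Fin n → EuclideanSpace ℝ (Fin d)) (y : Fin n → ℝ)
    (a : Fin p → ℝ → ℝ) (w : Fin p → ℝ → EuclideanSpace ℝ (Fin d))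
    (r : Fin n → ℝ → ℝ)
    (hr : ∀ i t, r i t = y i - (1 / (p : ℝ)) * ∑ k, a k t * max (⟪w k t, x i⟫) 0)
    (hw : ∀ j t, 0 ≤ t →
      HasDerivAt (w j)
        ((a j t / (n : ℝ)) • ∑ i, (if 0 < ⟪w j t, x i⟫ then r i t else 0) • x i) t)
    (ha : ∀ j t, 0 ≤ t →
      HasDerivAt (a j) ((1 / (n : ℝ)) * ∑ i, r i t * max (⟪w j t, x i⟫) 0) t) :
    ∀ j t, 0 ≤ t →
      ((a j t) ^ 2 - ‖w j t‖ ^ 2 = (a j 0) ^ 2 - ‖w j 0‖ ^ 2 ∧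
        (|a j 0| ≥ ‖w j 0‖ →
          0 ≤ a j 0 * a j t ∧ |a j t| ≥ ‖w j t‖)) := by
  -- the balance has zero derivative
  have key : ∀ j t, 0 ≤ t →
      HasDerivAt (fun u => (a j u) ^ 2 - ⟪w j u, w j u⟫) 0 t := by
    intro j t ht
    have ha' := ha j t ht
    have hw' := hw j t ht
    have h1 := ha'.pow 2
    have h2 := HasDerivAt.inner ℝ hw' hw'
    have hsum : ⟪w j t,
        (a j t / (n : ℝ)) • ∑ i, (if 0 < ⟪w j t, x i⟫ then r i t else 0) • x i⟫
        = a j t * ((1 / (n : ℝ)) * ∑ i, r i t * max (⟪w j t, x i⟫) 0) := by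
      rw [real_inner_smul_right, inner_sum]
      have : ∀ i : Fin n, ⟪w j t, (if 0 < ⟪w j t, x i⟫ then r i t else 0) • x i⟫
          = r i t * max (⟪w j t, x i⟫) 0 := by
        intro i
        rw [real_inner_smul_right]
        by_cases h : 0 < ⟪w j t, x i⟫
        · rw [if_pos h, max_eq_left h.le, mul_comm]
        · rw [if_neg h, max_eq_right (le_of_not_gt h), mul_zero, zero_mul]
      rw [Finset.sum_congr rfl fun i _ => this i]
      ring
    have e2 : ⟪(a j t / (n : ℝ)) • ∑ i, (if 0 < ⟪w j t, x i⟫ then r i t else 0) • x i,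
        w j t⟫ = a j t * ((1 / (n : ℝ)) * ∑ i, r i t * max (⟪w j t, x i⟫) 0) := by
      rw [real_inner_comm]; exact hsum
    have h3 := h1.sub h2
    refine h3.congr_deriv ?_
    simp only [hsum, e2]
    push_cast
    ring
  -- conservation of the balance
  have hconst : ∀ j t, 0 ≤ t →
      (a j t) ^ 2 - ‖w j t‖ ^ 2 = (a j 0) ^ 2 - ‖w j 0‖ ^ 2 := by
    intro j t ht
    have h := constant_of_has_deriv_right_zero
      (f := fun u => (a j u) ^ 2 - ⟪w j u, w j u⟫) (a := 0) (b := t)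
      (fun u hu => ((key j u hu.1).continuousAt).continuousWithinAt)
      (fun u hu => (key j u hu.1).hasDerivWithinAt)
    have h2 := h t ⟨ht, le_rfl⟩
    simpa only [real_inner_self_eq_norm_sq] using h2
  -- the norm bound
  have hub : ∀ j, ‖w j 0‖ ≤ |a j 0| → ∀ t, 0 ≤ t → ‖w j t‖ ≤ |a j t| := by
    intro j h0 t ht
    have h := hconst j t ht
    nlinarith [norm_nonneg (w j t), abs_nonneg (a j t), sq_abs (a j t), sq_abs (a j 0),
      norm_nonneg (w j 0), abs_nonneg (a j 0)]
  intro j t ht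
  refine ⟨hconst j t ht, fun h0 => ?_⟩
  have h0' : ‖w j 0‖ ≤ |a j 0| := h0
  refine ⟨?_, hub j h0' t ht⟩
  by_contra hneg
  push_neg at hneg
  -- find a zero of `a j` between `0` and `t`
  have hcontA : ContinuousOn (a j) (Set.Icc 0 t) := fun u hu =>
    ((ha j u hu.1).continuousAt).continuousWithinAt
  have h0mem : (0 : ℝ) ∈ Set.uIcc (a j 0) (a j t) := by
    rcases mul_neg_iff.mp hneg with ⟨h1, h2⟩ | ⟨h1, h2⟩
    · exact Set.mem_uIcc.mpr (Or.inr ⟨h2.le, h1.le⟩)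
    · exact Set.mem_uIcc.mpr (Or.inl ⟨h1.le, h2.le⟩)
  have hcontA' : ContinuousOn (a j) (Set.uIcc 0 t) := by
    rwa [Set.uIcc_of_le ht]
  obtain ⟨t₀, ht₀mem, ht₀⟩ := intermediate_value_uIcc hcontA' h0mem
  rw [Set.uIcc_of_le ht] at ht₀mem
  obtain ⟨ht₀0, ht₀t⟩ := ht₀mem
  -- continuity of the residuals on `[0, t₀]`
  have hca : ∀ k, ContinuousOn (a k) (Set.Icc 0 t₀) := fun k u hu =>
    ((ha k u hu.1).continuousAt).continuousWithinAt
  have hcw : ∀ k, ContinuousOn (w k) (Set.Icc 0 t₀) := fun k u hu =>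
    ((hw k u hu.1).continuousAt).continuousWithinAt
  have hcr : ∀ i, ContinuousOn (r i) (Set.Icc 0 t₀) := by
    intro i
    have hc : ContinuousOn
        (fun u => y i - (1 / (p : ℝ)) * ∑ k, a k u * max (⟪w k u, x i⟫) 0)
        (Set.Icc 0 t₀) := by
      refine continuousOn_const.sub (continuousOn_const.mul
        (continuousOn_finset_sum _ fun k _ => (hca k).mul ?_))
      exact ((hcw k).inner continuousOn_const).sup continuousOn_const
    exact hc.congr fun u _ => hr i u
  -- a uniform bound for the Grönwall constant
  have hφc : ContinuousOn (fun u => (1 / (n : ℝ)) * ∑ i, |r i u| * ‖x i‖)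
      (Set.Icc 0 t₀) :=
    continuousOn_const.mul
      (continuousOn_finset_sum _ fun i _ => ((hcr i).abs).mul continuousOn_const)
  obtain ⟨C, hC⟩ := isCompact_Icc.exists_bound_of_continuousOn hφc
  have hφnn : ∀ u : ℝ, 0 ≤ (1 / (n : ℝ)) * ∑ i, |r i u| * ‖x i‖ := by
    intro u
    have : ∀ i ∈ Finset.univ, (0:ℝ) ≤ |r i u| * ‖x i‖ := fun i _ =>
      mul_nonneg (abs_nonneg _) (norm_nonneg _)
    positivity
  have hC0 : (0 : ℝ) ≤ C :=
    le_trans (norm_nonneg _) (hC t₀ ⟨ht₀0, le_rfl⟩)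
  -- pointwise derivative bound
  have hbound : ∀ u, 0 ≤ u → u ≤ t₀ →
      |(1 / (n : ℝ)) * ∑ i, r i u * max (⟪w j u, x i⟫) 0| ≤ C * |a j u| := by
    intro u hu0 hut
    have step1 : |(1 / (n : ℝ)) * ∑ i, r i u * max (⟪w j u, x i⟫) 0|
        ≤ (1 / (n : ℝ)) * ∑ i, |r i u| * (‖w j u‖ * ‖x i‖) := by
      rw [abs_mul, abs_of_nonneg (by positivity : (0:ℝ) ≤ 1 / (n : ℝ))]
      refine mul_le_mul_of_nonneg_left ?_ (by positivity)
      refine (Finset.abs_sum_le_sum_abs _ _).trans (Finset.sum_le_sum fun i _ => ?_)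
      rw [abs_mul, abs_of_nonneg (le_max_right (⟪w j u, x i⟫) 0)]
      refine mul_le_mul_of_nonneg_left ?_ (abs_nonneg _)
      exact max_le ((le_abs_self _).trans (abs_real_inner_le_norm _ _))
        (mul_nonneg (norm_nonneg _) (norm_nonneg _))
    have step2 : (1 / (n : ℝ)) * ∑ i, |r i u| * (‖w j u‖ * ‖x i‖)
        = ‖w j u‖ * ((1 / (n : ℝ)) * ∑ i, |r i u| * ‖x i‖) := by
      simp only [Finset.mul_sum]
      exact Finset.sum_congr rfl fun i _ => by ring
    have hφleC : (1 / (n : ℝ)) * ∑ i, |r i u| * ‖x i‖ ≤ C :=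
      le_trans (le_abs_self _) (hC u ⟨hu0, hut⟩)
    have hwa : ‖w j u‖ ≤ |a j u| := hub j h0' u hu0
    calc |(1 / (n : ℝ)) * ∑ i, r i u * max (⟪w j u, x i⟫) 0|
        ≤ (1 / (n : ℝ)) * ∑ i, |r i u| * (‖w j u‖ * ‖x i‖) := step1
      _ = ‖w j u‖ * ((1 / (n : ℝ)) * ∑ i, |r i u| * ‖x i‖) := step2
      _ ≤ C * |a j u| := by
          nlinarith [hφnn u, norm_nonneg (w j u), abs_nonneg (a j u),
            mul_le_mul_of_nonneg_right hwa (hφnn u),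
            mul_le_mul_of_nonneg_left hφleC (abs_nonneg (a j u))]
  -- Grönwall backwards from `t₀`
  have hg : ∀ s ∈ Set.Icc (0:ℝ) t₀, ‖a j (t₀ - s)‖ ≤ gronwallBound 0 C 0 (s - 0) := by
    apply norm_le_gronwallBound_of_norm_deriv_right_le
      (f := fun s => a j (t₀ - s))
      (f' := fun s =>
        ((1 / (n : ℝ)) * ∑ i, r i (t₀ - s) * max (⟪w j (t₀ - s), x i⟫) 0) * (-1))
    · -- continuity
      have hmaps : Set.MapsTo (fun s : ℝ => t₀ - s) (Set.Icc 0 t₀) (Set.Icc 0 t₀) := by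
        intro s hs
        simp only [Set.mem_Icc] at *
        constructor <;> linarith [hs.1, hs.2]
      exact (hca j).comp ((continuous_const.sub continuous_id).continuousOn) hmaps
    · -- derivative
      intro s hs
      have hts : (0:ℝ) ≤ t₀ - s := by linarith [hs.2.le]
      have hsub : HasDerivAt (fun s : ℝ => t₀ - s) (-1) s := by
        simpa using (hasDerivAt_id s).const_sub t₀
      have hd := (ha j (t₀ - s) hts).comp s hsub
      exact hd.hasDerivWithinAt
    · simp [ht₀]
    · intro s hs
      have hts0 : (0:ℝ) ≤ t₀ - s := by linarith [hs.2.le]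
      have htst : t₀ - s ≤ t₀ := by linarith [hs.1]
      have hb := hbound (t₀ - s) hts0 htst
      simpa only [Real.norm_eq_abs, mul_neg_one, abs_neg, add_zero] using hb
  have hfin := hg t₀ ⟨ht₀0, le_rfl⟩
  rw [gronwallBound_ε0] at hfin
  simp only [sub_self, zero_mul, Real.norm_eq_abs] at hfin
  have : a j 0 = 0 := abs_eq_zero.mp (le_antisymm (by simpa using hfin) (abs_nonneg _))
  rw [this, zero_mul] at hneg
  exact absurd hneg (lt_irrefl 0)
end

section
/- Let d, n, p ≥ 1, let x_1, …, x_n ∈ ℝ^d be nonzero with C_x^- = min_i ‖x_i‖, C_x^+ = max_i ‖x_i‖, and let y_1, …, y_n ∈ ℝ be nonzero with C_y^- = min_i |y_i|, C_y^+ = max_i |y_i|. Let X ∈ ℝ^{d×n} have columns x_i and let D_X be the diagonal matrix with entries ‖x_i‖², and assume the low-correlation condition ‖XᵀX − D_X‖ < ((C_x^-)²/(2√n)) · (C_y^- /C_y^+). Let a_1, …, a_p ∈ ℝ, w_1, …, w_p ∈ ℝ^d with |a_j| ≥ ‖w_j‖ for all j. Set r_i = y_i − (1/p) Σ_{j=1}^p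 a_j max(⟨w_j, x_i⟩, 0), let R = (r_1,…,r_n) and assume R ≠ 0, let P_j be the diagonal matrix with entries 𝟙[⟨w_j, x_i⟩ > 0], and set μ = (2/(np‖R‖²)) Σ_{j=1}^p [ (w_jᵀ X P_j R)² + a_j² ‖X P_j R‖² ]. Then μ ≥ (6/(5n)) · ((C_x^-)²/C_x^+) · C_y^- · min_i |1 − r_i/y_i|. -/
open scoped RealInnerProductSpace

/-- The operator norm (induced by the Euclidean norms) of a real matrix. -/
noncomputable def opNorm {m n : ℕ} (A : Matrix (Fin m) (Fin n) ℝ) : ℝ :=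
  ‖LinearMap.toContinuousLinearMap (Matrix.toEuclideanLin A)‖

lemma quad_abs_le {n : ℕ} (A : Matrix (Fin n) (Fin n) ℝ) (u : EuclideanSpace ℝ (Fin n)) :
    |⟪u, Matrix.toEuclideanLin A u⟫| ≤ opNorm A * ‖u‖ ^ 2 := by
  have h1 := abs_real_inner_le_norm u (Matrix.toEuclideanLin A u)
  have h2 : ‖Matrix.toEuclideanLin A u‖ ≤ opNorm A * ‖u‖ := by
    have := (LinearMap.toContinuousLinearMap (Matrix.toEuclideanLin A)).le_opNorm u
    rwa [LinearMap.coe_toContinuousLinearMap'] at this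
  nlinarith [norm_nonneg u, norm_nonneg (Matrix.toEuclideanLin A u)]

lemma quad_expand {n : ℕ} (A : Matrix (Fin n) (Fin n) ℝ) (u : EuclideanSpace ℝ (Fin n)) :
    ⟪u, Matrix.toEuclideanLin A u⟫ = ∑ i, ∑ i', u i * (A i i' * u i') := by
  simp [Matrix.toEuclideanLin_apply, PiLp.inner_apply, Matrix.mulVec, dotProduct,
    Finset.mul_sum]
  refine Finset.sum_congr rfl fun i _ => ?_
  rw [Finset.sum_mul]
  exact Finset.sum_congr rfl fun j _ => by ring

lemma norm_sum_smul_sq {d n : ℕ} (c : Fin n → ℝ) (x : Fin n → EuclideanSpace ℝ (Fin d)) :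
    ‖∑ i, c i • x i‖ ^ 2 = ∑ i, ∑ i', c i * (c i' * ⟪x i, x i'⟫) := by
  rw [← real_inner_self_eq_norm_sq, sum_inner]
  congr 1; ext i
  rw [inner_sum]
  congr 1; ext i'
  rw [real_inner_smul_left, real_inner_smul_right]

lemma euclidean_norm_sq {n : ℕ} (R : EuclideanSpace ℝ (Fin n)) : ‖R‖ ^ 2 = ∑ i, (R i) ^ 2 := by
  rw [← real_inner_self_eq_norm_sq]
  simp only [PiLp.inner_apply, sq]
  simp
  simp only [sq]

set_option maxHeartbeats 1000000 in
/-- Under the low-correlation assumption and the balancedness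
`|a_j| ≥ ‖w_j‖`, the local PL curvature satisfies
`μ ≥ (6/(5n)) ((C_x^-)²/C_x^+) C_y^- min_i |1 - r_i/y_i|`. -/
theorem local_PL_lower_bound_low_correlation
    (d n p : ℕ) (hd : 1 ≤ d) (hn : 1 ≤ n) (hp : 1 ≤ p)
    (x : Fin n → EuclideanSpace ℝ (Fin d)) (hx : ∀ i, x i ≠ 0)
    (y : Fin n → ℝ) (hy : ∀ i, y i ≠ 0)
    (G D : Matrix (Fin n) (Fin n) ℝ)
    (hG : ∀ i i', G i i' = ⟪x i, x i'⟫)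
    (hD : D = Matrix.diagonal fun i => ‖x i‖ ^ 2)
    (hcorr : opNorm (G - D) <
      ((⨅ i, ‖x i‖) ^ 2 / (2 * Real.sqrt n)) * ((⨅ i, |y i|) / ⨆ i, |y i|))
    (a : Fin p → ℝ) (w : Fin p → EuclideanSpace ℝ (Fin d))
    (hbal : ∀ j, |a j| ≥ ‖w j‖)
    (r : Fin n → ℝ)
    (hr : ∀ i, r i = y i - (1 / (p : ℝ)) * ∑ j, a j * max (⟪w j, x i⟫) 0)
    (R : EuclideanSpace ℝ (Fin n)) (hR : ∀ i, R i = r i) (hR0 : R ≠ 0)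
    (v : Fin p → EuclideanSpace ℝ (Fin d))
    (hv : ∀ j, v j = ∑ i, (if 0 < ⟪w j, x i⟫ then r i else 0) • x i)
    (μ : ℝ)
    (hμ : μ = (2 / ((n : ℝ) * p * ‖R‖ ^ 2)) *
      ∑ j, (⟪w j, v j⟫ ^ 2 + (a j) ^ 2 * ‖v j‖ ^ 2)) :
    μ ≥ (6 / (5 * (n : ℝ))) * ((⨅ i, ‖x i‖) ^ 2 / ⨆ i, ‖x i‖) * (⨅ i, |y i|) *
      ⨅ i, |1 - r i / y i| := by
  haveI : NeZero n := ⟨by omega⟩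
  set Cxm := ⨅ i, ‖x i‖ with hCxm_def
  set Cxp := ⨆ i, ‖x i‖ with hCxp_def
  set Cym := ⨅ i, |y i| with hCym_def
  set Cyp := ⨆ i, |y i| with hCyp_def
  set ρ := ⨅ i, |1 - r i / y i| with hρ_def
  set ε := opNorm (G - D) with hε_def
  -- basic facts about the extrema
  have hCxm_le : ∀ i, Cxm ≤ ‖x i‖ := fun i => ciInf_le (Finite.bddBelow_range _) i
  have hCxp_ge : ∀ i, ‖x i‖ ≤ Cxp := fun i => by
    rw [hCxp_def]; exact le_ciSup (f := fun i => ‖x i‖) (Finite.bddAbove_range _) i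
  have hCym_le : ∀ i, Cym ≤ |y i| := fun i => ciInf_le (Finite.bddBelow_range _) i
  have hCyp_ge : ∀ i, |y i| ≤ Cyp := fun i => by
    rw [hCyp_def]; exact le_ciSup (f := fun i => |y i|) (Finite.bddAbove_range _) i
  have hρ_le : ∀ i, ρ ≤ |1 - r i / y i| := fun i => ciInf_le (Finite.bddBelow_range _) i
  obtain ⟨i₀, hi₀⟩ : ∃ i, ‖x i‖ = Cxm := exists_eq_ciInf_of_finite
  obtain ⟨i₁, hi₁⟩ : ∃ i, |y i| = Cym := exists_eq_ciInf_of_finite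
  obtain ⟨i₂, hi₂⟩ : ∃ i, |1 - r i / y i| = ρ := exists_eq_ciInf_of_finite
  have hCxm_pos : 0 < Cxm := hi₀ ▸ norm_pos_iff.mpr (hx i₀)
  have hCym_pos : 0 < Cym := hi₁ ▸ abs_pos.mpr (hy i₁)
  have hCxmp : Cxm ≤ Cxp := hi₀ ▸ hCxp_ge i₀
  have hCxp_pos : 0 < Cxp := lt_of_lt_of_le hCxm_pos hCxmp
  have hCymp : Cym ≤ Cyp := le_trans (hCym_le i₁) (hCyp_ge i₁)
  have hCyp_pos : 0 < Cyp := lt_of_lt_of_le hCym_pos hCymp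
  have hρ_nonneg : 0 ≤ ρ := hi₂ ▸ abs_nonneg _
  have hε_nonneg : 0 ≤ ε := norm_nonneg _
  have hp_pos : (0:ℝ) < p := by exact_mod_cast hp
  have hn_pos : (0:ℝ) < n := by exact_mod_cast hn
  have hR_pos : (0:ℝ) < ‖R‖ ^ 2 := pow_pos (norm_pos_iff.mpr hR0) 2
  -- bound on ε
  have hε_le : ε ≤ 2 / 5 * Cxm ^ 2 := by
    rcases eq_or_lt_of_le hn with h1 | h2
    · -- n = 1 : G - D = 0
      have hGD : G - D = 0 := by
        ext i i'
        have hii : i = i' := by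
          have hi := i.isLt; have hi' := i'.isLt
          exact Fin.ext (by omega)
        subst hii
        simp only [Matrix.sub_apply, Matrix.zero_apply, hG, hD, Matrix.diagonal_apply_eq]
        rw [real_inner_self_eq_norm_sq]
        ring
      have : ε = 0 := by rw [hε_def, hGD, opNorm, map_zero, map_zero, norm_zero]
      rw [this]; positivity
    · -- n ≥ 2
      have hs2 : Real.sqrt 2 ≤ Real.sqrt n := by
        apply Real.sqrt_le_sqrt; exact_mod_cast by omega
      have hs2pos : (0:ℝ) < Real.sqrt 2 := by positivity
      have hsq2 : Real.sqrt 2 ^ 2 = 2 := Real.sq_sqrt (by norm_num)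
      have hfrac : Cym / Cyp ≤ 1 := div_le_one_of_le₀ hCymp (le_of_lt hCyp_pos)
      have hfrac0 : 0 ≤ Cym / Cyp := by positivity
      have hA : Cxm ^ 2 / (2 * Real.sqrt n) ≤ Cxm ^ 2 / (2 * Real.sqrt 2) := by
        apply div_le_div_of_nonneg_left (by positivity) (by positivity)
        nlinarith
      have hB : Cxm ^ 2 / (2 * Real.sqrt 2) ≤ 2 / 5 * Cxm ^ 2 := by
        rw [div_le_iff₀ (by positivity)]
        nlinarith [sq_nonneg Cxm]
      have h3 : Cxm ^ 2 / (2 * Real.sqrt n) * (Cym / Cyp) ≤ Cxm ^ 2 / (2 * Real.sqrt n) := by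
        nlinarith [div_nonneg (sq_nonneg Cxm) (le_of_lt (show (0:ℝ) < 2 * Real.sqrt n by positivity))]
      linarith [hcorr]
  have hεx : ∀ i, ε ≤ ‖x i‖ ^ 2 := by
    intro i
    have h := pow_le_pow_left₀ (le_of_lt hCxm_pos) (hCxm_le i) 2
    have h2 := sq_nonneg Cxm
    linarith
  -- κ
  set κ := Cxm - ε / Cxm with hκ_def
  have hκ_nonneg : 0 ≤ κ := by
    rw [hκ_def, sub_nonneg, div_le_iff₀ hCxm_pos]
    nlinarith
  have hκ_ge : κ ≥ 3 / 5 * (Cxm ^ 2 / Cxp) := by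
    have h1 : Cxm ^ 2 / Cxp ≤ Cxm := by
      rw [div_le_iff₀ hCxp_pos]; nlinarith
    have h2 : ε / Cxm ≤ 2 / 5 * Cxm := by
      rw [div_le_iff₀ hCxm_pos]; nlinarith
    rw [hκ_def]; nlinarith
  -- predicted outputs q i = y i - r i
  set q : Fin n → ℝ := fun i => y i - r i with hq_def
  have hq : ∀ i, (p : ℝ) * q i = ∑ j, a j * max (⟪w j, x i⟫) 0 := by
    intro i
    have := hr i
    have hp0 : (p:ℝ) ≠ 0 := ne_of_gt hp_pos
    field_simp [hq_def] at this ⊢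
    linarith
  -- activation-weighted coefficient lower bound
  have hq_bound : ∀ i, (p : ℝ) * |q i| ≤ ‖x i‖ * ∑ j, (if 0 < ⟪w j, x i⟫ then (a j) ^ 2 else 0) := by
    intro i
    have h1 : |(p:ℝ) * q i| ≤ ∑ j, |a j * max (⟪w j, x i⟫) 0| := by
      rw [hq i]; exact Finset.abs_sum_le_sum_abs _ _
    have h2 : ∀ j, |a j * max (⟪w j, x i⟫) 0| ≤ ‖x i‖ * (if 0 < ⟪w j, x i⟫ then (a j) ^ 2 else 0) := by
      intro j
      by_cases hj : 0 < ⟪w j, x i⟫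
      · simp only [hj, if_true]
        rw [max_eq_left (le_of_lt hj), abs_mul, abs_of_pos hj]
        have hcs : ⟪w j, x i⟫ ≤ ‖w j‖ * ‖x i‖ := real_inner_le_norm _ _
        have hb := hbal j
        have hw : (0:ℝ) ≤ ‖w j‖ := norm_nonneg _
        have hxnn : (0:ℝ) ≤ ‖x i‖ := norm_nonneg _
        have habs : (0:ℝ) ≤ |a j| := abs_nonneg _
        calc |a j| * ⟪w j, x i⟫ ≤ |a j| * (‖w j‖ * ‖x i‖) := by
              exact mul_le_mul_of_nonneg_left hcs habs
          _ ≤ |a j| * (|a j| * ‖x i‖) := by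
              apply mul_le_mul_of_nonneg_left _ habs
              exact mul_le_mul_of_nonneg_right hb hxnn
          _ = ‖x i‖ * (a j) ^ 2 := by rw [← sq_abs]; ring
      · simp only [hj, if_false]
        rw [max_eq_right (le_of_not_gt hj)]
        simp
    have h3 : ∑ j, |a j * max (⟪w j, x i⟫) 0| ≤
        ∑ j, ‖x i‖ * (if 0 < ⟪w j, x i⟫ then (a j) ^ 2 else 0) :=
      Finset.sum_le_sum (fun j _ => h2 j)
    have h4 : |(p:ℝ) * q i| = (p:ℝ) * |q i| := by
      rw [abs_mul, abs_of_pos hp_pos]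
    rw [← h4, Finset.mul_sum]
    exact le_trans h1 h3
  -- ρ |y i| ≤ |q i|
  have hρy : ∀ i, ρ * |y i| ≤ |q i| := by
    intro i
    have h1 : 1 - r i / y i = q i / y i := by
      show 1 - r i / y i = (y i - r i) / y i
      rw [sub_div, div_self (hy i)]
    have h2 := hρ_le i
    rw [h1, abs_div, le_div_iff₀ (abs_pos.mpr (hy i))] at h2
    exact h2
  -- the activation vectors u j
  set u : Fin p → EuclideanSpace ℝ (Fin n) :=
    fun j => WithLp.toLp 2 (fun i => if 0 < ⟪w j, x i⟫ then r i else 0) with hu_def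
  have hu_sq : ∀ j i, (u j i) ^ 2 = (if 0 < ⟪w j, x i⟫ then (r i) ^ 2 else 0) := by
    intro j i
    rw [hu_def]
    by_cases hj : 0 < ⟪w j, x i⟫ <;> simp [hj]
  -- lower bound on ‖v j‖²
  have hv_norm : ∀ j, ∑ i, (u j i) ^ 2 * (‖x i‖ ^ 2 - ε) ≤ ‖v j‖ ^ 2 := by
    intro j
    have hnormu : ‖u j‖ ^ 2 = ∑ i, (u j i) ^ 2 := euclidean_norm_sq (u j)
    have hexp : ‖v j‖ ^ 2 = ∑ i, ∑ i', u j i * (u j i' * ⟪x i, x i'⟫) := by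
      rw [hv j]
      exact norm_sum_smul_sq _ _
    have inner_eq : ∀ i, ∑ i', u j i * ((G - D) i i' * u j i') =
        (∑ i', u j i * (u j i' * ⟪x i, x i'⟫)) - (u j i) ^ 2 * ‖x i‖ ^ 2 := by
      intro i
      have hterm : ∀ i', u j i * ((G - D) i i' * u j i') =
          u j i * (u j i' * ⟪x i, x i'⟫) -
            (if i' = i then (u j i') ^ 2 * ‖x i‖ ^ 2 else 0) := by
        intro i'
        rw [Matrix.sub_apply, hG, hD, Matrix.diagonal_apply]
        by_cases h : i' = i
        · subst h
          rw [if_pos rfl, if_pos rfl, real_inner_self_eq_norm_sq]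
          ring
        · rw [if_neg (fun hh => h hh.symm), if_neg h]
          ring
      rw [Finset.sum_congr rfl (fun i' _ => hterm i'), Finset.sum_sub_distrib,
        Finset.sum_ite_eq' Finset.univ i (fun i' => (u j i') ^ 2 * ‖x i‖ ^ 2)]
      simp
    have hquad : ⟪u j, Matrix.toEuclideanLin (G - D) (u j)⟫ =
        ‖v j‖ ^ 2 - ∑ i, (u j i) ^ 2 * ‖x i‖ ^ 2 := by
      rw [quad_expand, Finset.sum_congr rfl (fun i _ => inner_eq i),
        Finset.sum_sub_distrib, hexp]
    have habs := quad_abs_le (G - D) (u j)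
    rw [hquad, hnormu, ← hε_def] at habs
    have h1 := (abs_le.mp habs).1
    have h2 : ∑ i, (u j i) ^ 2 * (‖x i‖ ^ 2 - ε)
        = ∑ i, (u j i) ^ 2 * ‖x i‖ ^ 2 - ∑ i, ε * (u j i) ^ 2 := by
      rw [← Finset.sum_sub_distrib]
      exact Finset.sum_congr rfl (fun i _ => by ring)
    have h3 : ε * ∑ i, (u j i) ^ 2 = ∑ i, ε * (u j i) ^ 2 := Finset.mul_sum _ _ _
    linarith
  -- combine: key lower bound for the sum over j
  set c : Fin n → ℝ := fun i => ∑ j, (if 0 < ⟪w j, x i⟫ then (a j) ^ 2 else 0) with hc_def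
  have hc_nonneg : ∀ i, 0 ≤ c i := fun i => Finset.sum_nonneg (fun j _ => by positivity)
  have key : κ * ((p:ℝ) * (ρ * (Cym * ‖R‖ ^ 2))) ≤ ∑ j, (a j) ^ 2 * ‖v j‖ ^ 2 := by
    have step1 : ∑ j, (a j) ^ 2 * (∑ i, (u j i) ^ 2 * (‖x i‖ ^ 2 - ε))
        ≤ ∑ j, (a j) ^ 2 * ‖v j‖ ^ 2 :=
      Finset.sum_le_sum (fun j _ => mul_le_mul_of_nonneg_left (hv_norm j) (sq_nonneg _))
    have step2 : ∑ j, (a j) ^ 2 * (∑ i, (u j i) ^ 2 * (‖x i‖ ^ 2 - ε))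
        = ∑ i, (‖x i‖ ^ 2 - ε) * ((r i) ^ 2 * c i) := by
      have e1 : ∀ j, (a j) ^ 2 * (∑ i, (u j i) ^ 2 * (‖x i‖ ^ 2 - ε))
          = ∑ i, (a j) ^ 2 * ((u j i) ^ 2 * (‖x i‖ ^ 2 - ε)) := fun j => Finset.mul_sum _ _ _
      rw [Finset.sum_congr rfl (fun j _ => e1 j), Finset.sum_comm]
      refine Finset.sum_congr rfl (fun i _ => ?_)
      have e2 : (‖x i‖ ^ 2 - ε) * ((r i) ^ 2 * c i)
          = ∑ j, (‖x i‖ ^ 2 - ε) * ((r i) ^ 2 * (if 0 < ⟪w j, x i⟫ then (a j) ^ 2 else 0)) := by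
        rw [hc_def, Finset.mul_sum, Finset.mul_sum]
      rw [e2]
      refine Finset.sum_congr rfl (fun j _ => ?_)
      rw [hu_sq]
      by_cases hj : 0 < ⟪w j, x i⟫ <;> simp [hj] <;> ring
    have step3 : ∀ i, κ * ((p:ℝ) * (ρ * (Cym * (r i) ^ 2))) ≤
        (‖x i‖ ^ 2 - ε) * ((r i) ^ 2 * c i) := by
      intro i
      have h1 : (Cxm - ε / Cxm) * ‖x i‖ ≤ ‖x i‖ ^ 2 - ε := by
        have hs := hCxm_le i
        have hεdiv : ε / Cxm * Cxm = ε := div_mul_cancel₀ _ (ne_of_gt hCxm_pos)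
        nlinarith [mul_nonneg (sub_nonneg.2 hs) (norm_nonneg (x i)),
          mul_nonneg (div_nonneg hε_nonneg (le_of_lt hCxm_pos)) (sub_nonneg.2 hs)]
      have h2 : (p:ℝ) * |q i| ≤ ‖x i‖ * c i := hq_bound i
      have h4 : ρ * Cym ≤ |q i| :=
        le_trans (mul_le_mul_of_nonneg_left (hCym_le i) hρ_nonneg) (hρy i)
      have h5 : (p:ℝ) * (ρ * Cym) ≤ ‖x i‖ * c i :=
        le_trans (mul_le_mul_of_nonneg_left h4 (le_of_lt hp_pos)) h2
      have h6 : κ * ((p:ℝ) * (ρ * Cym)) ≤ κ * (‖x i‖ * c i) :=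
        mul_le_mul_of_nonneg_left h5 hκ_nonneg
      have h7 : κ * (‖x i‖ * c i) ≤ (‖x i‖ ^ 2 - ε) * c i := by
        have h8 := mul_le_mul_of_nonneg_right h1 (hc_nonneg i)
        calc κ * (‖x i‖ * c i) = (Cxm - ε / Cxm) * ‖x i‖ * c i := by rw [hκ_def]; ring
          _ ≤ (‖x i‖ ^ 2 - ε) * c i := h8
      have h9 := mul_le_mul_of_nonneg_right (le_trans h6 h7) (sq_nonneg (r i))
      calc κ * ((p:ℝ) * (ρ * (Cym * (r i) ^ 2)))
          = κ * ((p:ℝ) * (ρ * Cym)) * (r i) ^ 2 := by ring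
        _ ≤ (‖x i‖ ^ 2 - ε) * c i * (r i) ^ 2 := h9
        _ = (‖x i‖ ^ 2 - ε) * ((r i) ^ 2 * c i) := by ring
    have hRsum : ‖R‖ ^ 2 = ∑ i, (r i) ^ 2 := by
      rw [euclidean_norm_sq R]
      exact Finset.sum_congr rfl (fun i _ => by rw [hR i])
    have step5 : κ * ((p:ℝ) * (ρ * (Cym * ‖R‖ ^ 2)))
        = ∑ i, κ * ((p:ℝ) * (ρ * (Cym * (r i) ^ 2))) := by
      have e3 : ∀ t : ℝ, κ * ((p:ℝ) * (ρ * (Cym * t))) = (κ * ((p:ℝ) * (ρ * Cym))) * t :=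
        fun t => by ring
      rw [hRsum, e3, Finset.mul_sum]
      exact Finset.sum_congr rfl (fun i _ => by rw [e3])
    rw [step5]
    exact le_trans (le_trans (Finset.sum_le_sum (fun i _ => step3 i)) (le_of_eq step2.symm)) step1
  -- final assembly
  have hsum_ge : κ * ((p:ℝ) * (ρ * (Cym * ‖R‖ ^ 2))) ≤
      ∑ j, (⟪w j, v j⟫ ^ 2 + (a j) ^ 2 * ‖v j‖ ^ 2) := by
    refine le_trans key (Finset.sum_le_sum (fun j _ => ?_))
    nlinarith [sq_nonneg (⟪w j, v j⟫)]
  have hC_pos : (0:ℝ) < 2 / ((n : ℝ) * p * ‖R‖ ^ 2) := by positivity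
  have hμ_ge : (2 / (n:ℝ)) * (κ * (ρ * Cym)) ≤ μ := by
    rw [hμ]
    have h1 : (2 / ((n : ℝ) * p * ‖R‖ ^ 2)) * (κ * ((p:ℝ) * (ρ * (Cym * ‖R‖ ^ 2)))) ≤
        (2 / ((n : ℝ) * p * ‖R‖ ^ 2)) * ∑ j, (⟪w j, v j⟫ ^ 2 + (a j) ^ 2 * ‖v j‖ ^ 2) :=
      mul_le_mul_of_nonneg_left hsum_ge (le_of_lt hC_pos)
    have h2 : (2 / ((n : ℝ) * p * ‖R‖ ^ 2)) * (κ * ((p:ℝ) * (ρ * (Cym * ‖R‖ ^ 2)))) =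
        (2 / (n:ℝ)) * (κ * (ρ * Cym)) := by
      rw [div_mul_eq_mul_div, div_mul_eq_mul_div,
        div_eq_div_iff (by positivity) (by positivity)]
      ring
    linarith
  have hfinal : (6 / (5 * (n : ℝ))) * (Cxm ^ 2 / Cxp) * Cym * ρ ≤
      (2 / (n:ℝ)) * (κ * (ρ * Cym)) := by
    have h1 : (3 / 5 * (Cxm ^ 2 / Cxp)) * (ρ * Cym) ≤ κ * (ρ * Cym) :=
      mul_le_mul_of_nonneg_right hκ_ge (mul_nonneg hρ_nonneg (le_of_lt hCym_pos))
    have h2 : (0:ℝ) ≤ 2 / (n:ℝ) := by positivity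
    have h3 := mul_le_mul_of_nonneg_left h1 h2
    have h4 : (2 / (n:ℝ)) * ((3 / 5 * (Cxm ^ 2 / Cxp)) * (ρ * Cym)) =
        (6 / (5 * (n : ℝ))) * (Cxm ^ 2 / Cxp) * Cym * ρ := by
      ring
    linarith
  linarith
end

section
/- Let (Ω, ℱ, P) be a probability space, d, n, p ≥ 1, x_1, …, x_n ∈ ℝ^d, and y_1, …, y_n ∈ ℝ nonzero. Let (a_j, w_j), j = 1, …, p, be mutually independent random pairs with values in ℝ × ℝ^d such that for each j: a_j is independent of w_j, P(a_j > 0) = P(a_j < 0) = 1/2, and P(⟨w_j, x_i⟩ > 0) = 1/2 for every i ∈ {1,…,n}. Then P( for all i there exists j with ⟨w_j, x_i⟩ > 0 and a_j y_i > 0 ) ≥ 1 − n (3/4)^p. In particular, for any ε ∈ (0,1), if p ≥ 4 log(n/ε) then this probability is at least 1 − ε. -/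
open scoped RealInnerProductSpace
open MeasureTheory ProbabilityTheory
open scoped ENNReal

/-- With independent symmetric initialization, every data point has a
correctly activated neuron with probability at least `1 - n (3/4)^p`; in particular at
least `1 - ε` as soon as `p ≥ 4 log(n/ε)`. -/
theorem good_initialization_probability
    {Ω : Type*} [MeasurableSpace Ω] (P : Measure Ω) [IsProbabilityMeasure P]
    (d n p : ℕ) (hd : 1 ≤ d) (hn : 1 ≤ n) (hp : 1 ≤ p)
    (x : Fin n → EuclideanSpace ℝ (Fin d)) (y : Fin n → ℝ) (hy : ∀ i, y i ≠ 0)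
    (a : Fin p → Ω → ℝ) (w : Fin p → Ω → EuclideanSpace ℝ (Fin d))
    (hameas : ∀ j, Measurable (a j)) (hwmeas : ∀ j, Measurable (w j))
    (hindep : iIndepFun
      (fun j ω => (a j ω, w j ω)) P)
    (hindep' : ∀ j, IndepFun (a j) (w j) P)
    (hapos : ∀ j, P {ω | 0 < a j ω} = 1/2)
    (haneg : ∀ j, P {ω | a j ω < 0} = 1/2)
    (hwhalf : ∀ j i, P {ω | 0 < ⟪w j ω, x i⟫} = 1/2) :
    1 - (n : ℝ) * (3 / 4) ^ p ≤
      (P {ω | ∀ i, ∃ j, 0 < ⟪w j ω, x i⟫ ∧ 0 < a j ω * y i}).toReal ∧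
    ∀ ε : ℝ, 0 < ε → ε < 1 → (p : ℝ) ≥ 4 * Real.log (n / ε) →
      1 - ε ≤ (P {ω | ∀ i, ∃ j, 0 < ⟪w j ω, x i⟫ ∧ 0 < a j ω * y i}).toReal := by
  classical
  set f : Fin p → Ω → ℝ × EuclideanSpace ℝ (Fin d) := fun j ω => (a j ω, w j ω) with hf
  have hfmeas : ∀ j, Measurable (f j) := fun j => (hameas j).prodMk (hwmeas j)
  set Tw : Fin n → Set (EuclideanSpace ℝ (Fin d)) := fun i => {v | 0 < ⟪v, x i⟫} with hTw
  set Ta : Fin n → Set ℝ := fun i => {t | 0 < t * y i} with hTa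
  have hTwm : ∀ i, MeasurableSet (Tw i) := fun i =>
    measurableSet_lt measurable_const (measurable_id.inner measurable_const)
  have hTam : ∀ i, MeasurableSet (Ta i) := fun i =>
    measurableSet_lt measurable_const (measurable_id.mul_const _)
  set Sg : Fin n → Set (ℝ × EuclideanSpace ℝ (Fin d)) :=
    fun i => {q | 0 < ⟪q.2, x i⟫ ∧ 0 < q.1 * y i} with hSg
  have hSgm : ∀ i, MeasurableSet (Sg i) := by
    intro i
    have hEq : Sg i = {q : ℝ × EuclideanSpace ℝ (Fin d) | 0 < ⟪q.2, x i⟫}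
        ∩ {q : ℝ × EuclideanSpace ℝ (Fin d) | 0 < q.1 * y i} := rfl
    rw [hEq]
    exact (measurableSet_lt measurable_const (measurable_snd.inner measurable_const)).inter
      (measurableSet_lt measurable_const (measurable_fst.mul_const _))
  -- Probability that `a j` has the correct sign is 1/2
  have hTaP : ∀ j i, P (a j ⁻¹' Ta i) = 1/2 := by
    intro j i
    rcases (hy i).lt_or_gt with hneg | hpos
    · have hEq : a j ⁻¹' Ta i = {ω | a j ω < 0} := by
        ext ω
        simp only [Set.mem_preimage, hTa, Set.mem_setOf_eq, mul_pos_iff]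
        constructor
        · rintro (⟨h1, h2⟩ | ⟨h1, h2⟩)
          · linarith
          · exact h1
        · intro h; exact Or.inr ⟨h, hneg⟩
      rw [hEq]; exact haneg j
    · have hEq : a j ⁻¹' Ta i = {ω | 0 < a j ω} := by
        ext ω
        simp only [Set.mem_preimage, hTa, Set.mem_setOf_eq, mul_pos_iff]
        constructor
        · rintro (⟨h1, h2⟩ | ⟨h1, h2⟩)
          · exact h1
          · linarith
        · intro h; exact Or.inl ⟨h, hpos⟩
      rw [hEq]; exact hapos j
  -- Probability that neuron `j` is good for point `i` is 1/4
  have hgoodP : ∀ j i, P (f j ⁻¹' Sg i) = 1/4 := by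
    intro j i
    have hset : f j ⁻¹' Sg i = a j ⁻¹' Ta i ∩ w j ⁻¹' Tw i := by
      ext ω
      simp only [Set.mem_preimage, hSg, hf, Set.mem_setOf_eq, Set.mem_inter_iff, hTa, hTw]
      tauto
    rw [hset, (hindep' j).measure_inter_preimage_eq_mul _ _ (hTam i) (hTwm i),
      hTaP j i]
    have : w j ⁻¹' Tw i = {ω | 0 < ⟪w j ω, x i⟫} := rfl
    rw [this, hwhalf j i]
    rw [show (1:ℝ≥0∞)/2 = 2⁻¹ by simp, show (1:ℝ≥0∞)/4 = 4⁻¹ by simp,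
      ← ENNReal.mul_inv (by norm_num) (by norm_num)]
    norm_num
  -- Probability that every neuron is bad for point `i` is (3/4)^p
  have hbadP : ∀ i, P (⋂ j, f j ⁻¹' (Sg i)ᶜ) = (3/4 : ℝ≥0∞) ^ p := by
    intro i
    rw [hindep.meas_iInter (fun j => ⟨(Sg i)ᶜ, (hSgm i).compl, rfl⟩)]
    have hone : ∀ j, P (f j ⁻¹' (Sg i)ᶜ) = 3/4 := by
      intro j
      rw [Set.preimage_compl, prob_compl_eq_one_sub ((hSgm i).preimage (hfmeas j)),
        hgoodP j i]
      rw [ENNReal.sub_eq_of_eq_add (by norm_num)]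
      rw [ENNReal.div_add_div_same (a := (3:ℝ≥0∞))]
      norm_num
      rw [ENNReal.div_self] <;> norm_num
    simp only [hone, Finset.prod_const, Finset.card_univ, Fintype.card_fin]
  -- The bad union
  have hUm : MeasurableSet (⋃ i, ⋂ j, f j ⁻¹' (Sg i)ᶜ) :=
    MeasurableSet.iUnion fun i => MeasurableSet.iInter fun j =>
      (hSgm i).compl.preimage (hfmeas j)
  have hsetEq : {ω | ∀ i, ∃ j, 0 < ⟪w j ω, x i⟫ ∧ 0 < a j ω * y i}
      = (⋃ i, ⋂ j, f j ⁻¹' (Sg i)ᶜ)ᶜ := by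
    ext ω
    simp only [Set.mem_setOf_eq, Set.mem_compl_iff, Set.mem_iUnion, Set.mem_iInter,
      Set.mem_preimage, hSg, hf, not_exists, not_forall, not_not]
  have hUnion : P (⋃ i, ⋂ j, f j ⁻¹' (Sg i)ᶜ) ≤ (n : ℝ≥0∞) * (3/4 : ℝ≥0∞) ^ p := by
    refine (measure_iUnion_le _).trans ?_
    rw [tsum_fintype]
    simp only [hbadP, Finset.sum_const, Finset.card_univ, Fintype.card_fin, nsmul_eq_mul]
    exact le_rfl
  have hRHSne : (n : ℝ≥0∞) * (3/4 : ℝ≥0∞) ^ p ≠ ⊤ := by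
    apply ENNReal.mul_ne_top (ENNReal.natCast_ne_top n)
    exact ENNReal.pow_ne_top (ne_of_lt (ENNReal.div_lt_top (by norm_num) (by norm_num)))
  have hmain : 1 - (n : ℝ) * (3 / 4) ^ p ≤
      (P {ω | ∀ i, ∃ j, 0 < ⟪w j ω, x i⟫ ∧ 0 < a j ω * y i}).toReal := by
    rw [hsetEq, prob_compl_eq_one_sub hUm,
      ENNReal.toReal_sub_of_le prob_le_one ENNReal.one_ne_top]
    have h1 : (P (⋃ i, ⋂ j, f j ⁻¹' (Sg i)ᶜ)).toReal
        ≤ ((n : ℝ≥0∞) * (3/4 : ℝ≥0∞) ^ p).toReal :=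
      ENNReal.toReal_mono hRHSne hUnion
    have h2 : ((n : ℝ≥0∞) * (3/4 : ℝ≥0∞) ^ p).toReal = (n : ℝ) * (3/4 : ℝ) ^ p := by
      rw [ENNReal.toReal_mul, ENNReal.toReal_pow, ENNReal.toReal_div]
      norm_num
    rw [h2] at h1
    simp only [ENNReal.toReal_one]
    linarith
  refine ⟨hmain, ?_⟩
  intro ε hε0 hε1 hpge
  have hn0 : (0 : ℝ) < n := by exact_mod_cast hn
  have hεbound : (n : ℝ) * (3/4 : ℝ) ^ p ≤ ε := by
    have hlog34 : Real.log (3/4) ≤ -(1/4) := by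
      have := Real.log_le_sub_one_of_pos (show (0:ℝ) < 3/4 by norm_num)
      linarith
    have hlogdiv : Real.log ((n:ℝ)/ε) = Real.log n - Real.log ε :=
      Real.log_div (ne_of_gt hn0) (ne_of_gt hε0)
    rw [hlogdiv] at hpge
    have hpmul : (p : ℝ) * Real.log (3/4) ≤ (p : ℝ) * (-(1/4)) :=
      mul_le_mul_of_nonneg_left hlog34 (Nat.cast_nonneg p)
    have hcalc : Real.log ((n:ℝ) * (3/4 : ℝ) ^ p) ≤ Real.log ε := by
      rw [Real.log_mul (ne_of_gt hn0) (by positivity), Real.log_pow]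
      linarith
    calc (n : ℝ) * (3/4 : ℝ) ^ p
        = Real.exp (Real.log ((n:ℝ) * (3/4 : ℝ) ^ p)) := by
          rw [Real.exp_log (by positivity)]
      _ ≤ Real.exp (Real.log ε) := Real.exp_le_exp.mpr hcalc
      _ = ε := Real.exp_log hε0
  linarith
end

section
/- Let c > 0 and x₀ ∈ (−1, 1], and let x : [0,∞) → ℝ be differentiable with x(0) = x₀ and x'(t) = c (1 − x(t)²) for all t ≥ 0. Then for all t ≥ 0, x(t) = ( sinh(ct) + x₀ cosh(ct) ) / ( cosh(ct) + x₀ sinh(ct) ). -/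
/-- The solution of `x' = c(1 - x²)`, `x(0) = x₀ ∈ (-1,1]`, is
`x(t) = (sinh(ct) + x₀ cosh(ct)) / (cosh(ct) + x₀ sinh(ct))`. -/
theorem alignment_ode_closed_form
    (c : ℝ) (hc : 0 < c) (x₀ : ℝ) (hx₀ : -1 < x₀) (hx₀' : x₀ ≤ 1)
    (x : ℝ → ℝ) (hinit : x 0 = x₀)
    (hode : ∀ t, 0 ≤ t → HasDerivAt x (c * (1 - (x t) ^ 2)) t) :
    ∀ t, 0 ≤ t →
      x t = (Real.sinh (c * t) + x₀ * Real.cosh (c * t)) /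
        (Real.cosh (c * t) + x₀ * Real.sinh (c * t)) := by
  set D : ℝ → ℝ := fun t => Real.cosh (c * t) + x₀ * Real.sinh (c * t) with hDdef
  set N : ℝ → ℝ := fun t => Real.sinh (c * t) + x₀ * Real.cosh (c * t) with hNdef
  set xt : ℝ → ℝ := fun t => x (max t 0) with hxtdef
  have hcxt : Continuous xt := by
    rw [continuous_iff_continuousAt]
    intro t
    have hm : Continuous fun s : ℝ => max s 0 := continuous_id.max continuous_const
    exact ContinuousAt.comp (g := x) (f := fun s : ℝ => max s 0)
      ((hode _ (le_max_right t 0)).continuousAt) hm.continuousAt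
  set F : ℝ → ℝ := fun t => ∫ s in (0:ℝ)..t, xt s with hFdef
  have hF : ∀ t, HasDerivAt F (xt t) t := fun t =>
    (hcxt.integral_hasStrictDerivAt 0 t).hasDerivAt
  set w : ℝ → ℝ := fun t => x t * D t - N t with hwdef
  have hw : ∀ t, 0 ≤ t → HasDerivAt w (-(c * x t) * w t) t := by
    intro t ht
    have h1 : HasDerivAt (fun s : ℝ => c * s) c t := by
      simpa using (hasDerivAt_id t).const_mul c
    have hD' : HasDerivAt D (c * N t) t := by
      have := (h1.cosh).add ((h1.sinh).const_mul x₀)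
      refine HasDerivAt.congr_deriv this ?_
      simp [hNdef]; ring
    have hN' : HasDerivAt N (c * D t) t := by
      have := (h1.sinh).add ((h1.cosh).const_mul x₀)
      refine HasDerivAt.congr_deriv this ?_
      simp [hDdef]; ring
    have := ((hode t ht).mul hD').sub hN'
    refine HasDerivAt.congr_deriv this ?_
    ring
  set v : ℝ → ℝ := fun t => w t * Real.exp (c * F t) with hvdef
  have hv : ∀ t, 0 ≤ t → HasDerivAt v 0 t := by
    intro t ht
    have hFe : HasDerivAt (fun s => Real.exp (c * F s)) (Real.exp (c * F t) * (c * xt t)) t :=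
      ((hF t).const_mul c).exp
    have := (hw t ht).mul hFe
    refine HasDerivAt.congr_deriv this ?_
    have hxx : xt t = x t := by simp [hxtdef, max_eq_left ht]
    rw [hxx]; ring
  intro T hT
  have hconst := constant_of_has_deriv_right_zero
    (f := v) (a := 0) (b := T)
    (fun t ht => ((hv t ht.1).continuousAt).continuousWithinAt)
    (fun t ht => (hv t ht.1).hasDerivWithinAt)
  have hvT : v T = v 0 := hconst T (Set.mem_Icc.mpr ⟨hT, le_rfl⟩)
  have hv0 : v 0 = 0 := by
    simp [hvdef, hwdef, hFdef, hDdef, hNdef, hinit]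
  have hwT : w T = 0 := by
    have := hvT.trans hv0
    have hexp : Real.exp (c * F T) ≠ 0 := Real.exp_ne_zero _
    rcases mul_eq_zero.mp this with h | h
    · exact h
    · exact absurd h hexp
  have hDT : 0 < D T := by
    have ha : 0 ≤ c * T := mul_nonneg hc.le hT
    have hs : 0 ≤ Real.sinh (c * T) := Real.sinh_nonneg_iff.mpr ha
    have he : Real.cosh (c * T) - Real.sinh (c * T) = Real.exp (-(c * T)) :=
      Real.cosh_sub_sinh _
    have hep : 0 < Real.exp (-(c * T)) := Real.exp_pos _
    simp only [hDdef]
    nlinarith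
  have : x T * D T = N T := by
    have := hwT
    simp only [hwdef] at this
    linarith
  rw [eq_div_iff hDT.ne']
  exact this
end

section
/- Let k, n, p ≥ 1, s ∈ {−1, 1}, let x_1, …, x_k ∈ ℝ^d be orthonormal, and let y_1, …, y_k be nonzero reals with sign s. Let D = (1/√k) Σ_{i=1}^k y_i x_i and let P denote the orthogonal projection of ℝ^d onto span{x_1,…,x_k}. Let w : [0,∞) → ℝ^d be differentiable with ⟨w(t), x_i⟩ > 0 for all t ≥ 0 and all i, set a(t) = s · ( Σ_{i=1}^k ⟨w(t), x_i⟩² )^{1/2}, r_i(t) = y_i − (a(t)/p) ⟨w(t), x_i⟩, and assume w'(t) = (a(t)/n) Σ_{i=1}^k r_i(t) x_i. Then the alignment h(t) = ⟨ D/‖D‖ , s · P w(t)/‖P w(t)‖ ⟩ is differentiable with h'(t) = ( √k ‖D‖ / n ) ( 1 − h(t)² ) for all t ≥ 0. -/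
open scoped RealInnerProductSpace

lemma alignment_alg (s q U S K N n p : ℝ) (hs : s = 1 ∨ s = -1) (hq : q ≠ 0) (hN : N ≠ 0)
    (hK : K ≠ 0) (hn : n ≠ 0) (hp : p ≠ 0) (hS : K * K * N ^ 2 = S) :
    K * N / n * (1 - (s * N⁻¹ * K⁻¹ * (U / q)) ^ 2) =
    s * N⁻¹ * K⁻¹ *
      (((s * q / n * S - s * q / n * (s * q / p) * U) * q
        - U * ((2 * (s * q / n) * U - 2 * (s * q / n) * (s * q / p) * q ^ 2) / (2 * q))) / q ^ 2) := by
  subst hS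
  rcases hs with rfl | rfl <;> field_simp <;> ring

/-- For the decoupled single-neuron dynamics on orthonormal data
with outputs of sign `s`, the alignment `h(t) = ⟪D̄, s·Pw(t)/‖Pw(t)‖⟫` satisfies
`h' = (√k ‖D‖ / n)(1 - h²)`. -/
theorem alignment_dynamics
    (d k n p : ℕ) (hk : 1 ≤ k) (hn : 1 ≤ n) (hp : 1 ≤ p)
    (s : ℝ) (hs : s = 1 ∨ s = -1)
    (x : Fin k → EuclideanSpace ℝ (Fin d)) (hx : Orthonormal ℝ x)
    (y : Fin k → ℝ) (hy : ∀ i, 0 < s * y i)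
    (D : EuclideanSpace ℝ (Fin d))
    (hD : D = (1 / Real.sqrt k) • ∑ i, y i • x i)
    (w : ℝ → EuclideanSpace ℝ (Fin d))
    (hwact : ∀ t, 0 ≤ t → ∀ i, 0 < ⟪w t, x i⟫)
    (aNeuron : ℝ → ℝ)
    (haNeuron : ∀ t, aNeuron t = s * Real.sqrt (∑ i, ⟪w t, x i⟫ ^ 2))
    (r : Fin k → ℝ → ℝ)
    (hr : ∀ i t, r i t = y i - (aNeuron t / (p : ℝ)) * ⟪w t, x i⟫)
    (hw : ∀ t, 0 ≤ t →
      HasDerivAt w ((aNeuron t / (n : ℝ)) • ∑ i, r i t • x i) t)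
    (Pw : ℝ → EuclideanSpace ℝ (Fin d))
    (hPw : ∀ t, Pw t =
      (Submodule.orthogonalProjection (Submodule.span ℝ (Set.range x)) (w t) :
        EuclideanSpace ℝ (Fin d)))
    (h : ℝ → ℝ)
    (hh : ∀ t, h t = ⟪‖D‖⁻¹ • D, s • ‖Pw t‖⁻¹ • Pw t⟫) :
    ∀ t, 0 ≤ t →
      HasDerivAt h ((Real.sqrt k * ‖D‖ / (n : ℝ)) * (1 - h t ^ 2)) t := by
  classical
  -- basic positivity
  have hs2 : s * s = 1 := by rcases hs with rfl | rfl <;> norm_num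
  have hkR : (0:ℝ) < (k:ℝ) := by exact_mod_cast hk
  have hnR : (0:ℝ) < (n:ℝ) := by exact_mod_cast hn
  have hpR : (0:ℝ) < (p:ℝ) := by exact_mod_cast hp
  have hK : (0:ℝ) < Real.sqrt k := Real.sqrt_pos.mpr hkR
  have hK2 : Real.sqrt k * Real.sqrt k = (k:ℝ) := Real.mul_self_sqrt hkR.le
  -- the coordinate functions
  set c : Fin k → ℝ → ℝ := fun i t => ⟪w t, x i⟫ with hc
  -- the projection is the sum of coordinates
  have hPw' : ∀ t, Pw t = ∑ i, c i t • x i := by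
    intro t
    rw [hPw]
    apply Submodule.eq_starProjection_of_mem_of_inner_eq_zero
    · exact Submodule.sum_mem _ fun i _ =>
        Submodule.smul_mem _ _ (Submodule.subset_span ⟨i, rfl⟩)
    · intro z hz
      induction hz using Submodule.span_induction with
      | mem z hz =>
        obtain ⟨i, rfl⟩ := hz
        rw [inner_sub_left, hx.inner_left_fintype]
        simp [hc]
      | zero => simp
      | add a b _ _ ha hb => rw [inner_add_right, ha, hb, add_zero]
      | smul a z _ hz => rw [real_inner_smul_right, hz, mul_zero]
  -- inner products with orthonormal sums
  have hinner_sum : ∀ (l m : Fin k → ℝ),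
      ⟪∑ i, l i • x i, ∑ i, m i • x i⟫ = ∑ i, l i * m i := by
    intro l m
    simpa using hx.inner_sum l m Finset.univ
  -- norm of Pw
  have hQ0 : ∀ t, ‖Pw t‖ ^ 2 = ∑ i, (c i t) ^ 2 := by
    intro t
    rw [← real_inner_self_eq_norm_sq, hPw' t, hinner_sum]
    simp [sq]
  have hnormPw : ∀ t, ‖Pw t‖ = Real.sqrt (∑ i, (c i t) ^ 2) := by
    intro t
    rw [← hQ0 t, Real.sqrt_sq (norm_nonneg _)]
  -- aNeuron is s·‖Pw‖
  have ha' : ∀ t, aNeuron t = s * ‖Pw t‖ := by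
    intro t; rw [haNeuron, hnormPw]
  -- inner product of D with Pw
  have hDPw : ∀ t, ⟪D, Pw t⟫ = (Real.sqrt k)⁻¹ * ∑ i, y i * c i t := by
    intro t
    rw [hD, hPw' t, real_inner_smul_left, hinner_sum]
    norm_num
  -- norm of D
  set S : ℝ := ∑ i, (y i) ^ 2 with hS
  have hSpos : 0 < S := by
    have : ∀ i, 0 < (y i) ^ 2 := by
      intro i
      have := hy i
      have hyne : y i ≠ 0 := by
        intro h0; rw [h0, mul_zero] at this; exact lt_irrefl _ this
      positivity
    exact Finset.sum_pos (fun i _ => this i) ⟨⟨0, hk⟩, Finset.mem_univ _⟩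
  have hDnorm2 : (k:ℝ) * ‖D‖ ^ 2 = S := by
    have h1 : ‖D‖ ^ 2 = ⟪D, D⟫ := (real_inner_self_eq_norm_sq D).symm
    rw [h1, hD, real_inner_smul_left, real_inner_smul_right, hinner_sum]
    have h2 : ∑ i, y i * y i = S := by simp [hS, sq]
    rw [h2]
    have hKne : Real.sqrt (k:ℝ) ≠ 0 := ne_of_gt hK
    field_simp
    rw [Real.sq_sqrt hkR.le]
  have hDpos : 0 < ‖D‖ := by
    rcases lt_or_eq_of_le (norm_nonneg D) with h' | h'
    · exact h'
    · exfalso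
      rw [← h'] at hDnorm2
      simp at hDnorm2
      nlinarith
  -- the closed formula for h
  set Cst : ℝ := s * ‖D‖⁻¹ * (Real.sqrt k)⁻¹ with hCst
  have hform : h = fun t =>
      Cst * ((∑ i, y i * c i t) / Real.sqrt (∑ i, (c i t) ^ 2)) := by
    funext t
    rw [hh, real_inner_smul_left, real_inner_smul_right, real_inner_smul_right,
      hDPw, hnormPw]
    simp [hCst]
    ring
  -- now fix a time t₀
  intro t₀ ht₀
  set q : ℝ := Real.sqrt (∑ i, (c i t₀) ^ 2) with hq
  have hqPw : q = ‖Pw t₀‖ := (hnormPw t₀).symm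
  have hqpos : 0 < q := by
    rw [hqPw, hnormPw]
    apply Real.sqrt_pos.mpr
    have : ∀ i, 0 < (c i t₀) ^ 2 := by
      intro i
      have := hwact t₀ ht₀ i
      positivity
    exact Finset.sum_pos (fun i _ => this i) ⟨⟨0, hk⟩, Finset.mem_univ _⟩
  have hq2 : q ^ 2 = ∑ i, (c i t₀) ^ 2 := by
    rw [hq, Real.sq_sqrt]
    positivity
  set a : ℝ := aNeuron t₀ with haa
  have haq : a = s * q := by rw [haa, ha' t₀, hqPw]
  set U : ℝ := ∑ i, y i * c i t₀ with hU
  -- derivative of each coordinate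
  have hci : ∀ i, HasDerivAt (fun t => c i t) (a / n * r i t₀) t₀ := by
    intro i
    have h1 := (hw t₀ ht₀).inner ℝ (hasDerivAt_const t₀ (x i))
    have h2 : ⟪w t₀, (0 : EuclideanSpace ℝ (Fin d))⟫
        + ⟪(aNeuron t₀ / (n : ℝ)) • ∑ j, r j t₀ • x j, x i⟫ = a / n * r i t₀ := by
      rw [inner_zero_right, zero_add, real_inner_smul_left, hx.inner_left_fintype]
      simp [haa]
    rw [h2] at h1
    exact h1
  -- derivative of U and Q
  have hU' : HasDerivAt (fun t => ∑ i, y i * c i t)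
      (a / n * S - a / n * (a / p) * U) t₀ := by
    have := HasDerivAt.fun_sum (fun i (_ : i ∈ Finset.univ) => (hci i).const_mul (y i))
    refine this.congr_deriv ?_
    symm
    rw [hU, hS, Finset.mul_sum, Finset.mul_sum, ← Finset.sum_sub_distrib]
    apply Finset.sum_congr rfl
    intro i _
    rw [hr i t₀, ← haa]
    ring
  have hQ' : HasDerivAt (fun t => ∑ i, (c i t) ^ 2)
      (2 * (a / n) * U - 2 * (a / n) * (a / p) * q ^ 2) t₀ := by
    have := HasDerivAt.fun_sum (fun i (_ : i ∈ Finset.univ) => (hci i).pow 2)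
    refine this.congr_deriv ?_
    symm
    rw [hU, hq2, Finset.mul_sum, Finset.mul_sum, ← Finset.sum_sub_distrib]
    apply Finset.sum_congr rfl
    intro i _
    rw [hr i t₀, ← haa]
    ring
  -- derivative of sqrt Q
  have hQne : (∑ i, (c i t₀) ^ 2) ≠ 0 := by rw [← hq2]; positivity
  have hsq : HasDerivAt (fun t => Real.sqrt (∑ i, (c i t) ^ 2))
      ((2 * (a / n) * U - 2 * (a / n) * (a / p) * q ^ 2) / (2 * q)) t₀ := by
    have := hQ'.sqrt hQne
    rwa [← hq] at this
  -- derivative of h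
  have hqne : q ≠ 0 := ne_of_gt hqpos
  have hmain : HasDerivAt h
      (Cst * (((a / n * S - a / n * (a / p) * U) * q
        - U * ((2 * (a / n) * U - 2 * (a / n) * (a / p) * q ^ 2) / (2 * q))) / q ^ 2)) t₀ := by
    rw [hform]
    exact ((hU'.div hsq hqne).const_mul Cst)
  convert hmain using 1
  -- final algebraic identity
  have hht₀ : h t₀ = Cst * (U / q) := by rw [hform]
  rw [hht₀, haq, hCst]
  have hDne : ‖D‖ ≠ 0 := ne_of_gt hDpos
  have hKne : Real.sqrt (k:ℝ) ≠ 0 := ne_of_gt hK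
  have hnne : (n:ℝ) ≠ 0 := ne_of_gt hnR
  have hpne : (p:ℝ) ≠ 0 := ne_of_gt hpR
  exact alignment_alg s q U S (Real.sqrt k) ‖D‖ n p hs hqne hDne hKne hnne hpne
    (by rw [hK2]; exact hDnorm2)
end

section
/- Let k, n, p ≥ 1, s ∈ {−1, 1}, let x_1, …, x_k ∈ ℝ^d be orthonormal, and let y_1, …, y_k be nonzero reals with sign s. Let D = (1/√k) Σ_{i=1}^k y_i x_i and let P denote the orthogonal projection of ℝ^d onto span{x_1,…,x_k}. Let w : [0,∞) → ℝ^d be differentiable with ⟨w(t), x_i⟩ > 0 for all t ≥ 0 and all i, set a(t) = s · ( Σ_{i=1}^k ⟨w(t), x_i⟩² )^{1/2}, r_i(t) = y_i − (a(t)/p) ⟨w(t), x_i⟩, and assume w'(t) = (a(t)/n) Σ_{i=1}^k r_i(t) x_i. Then, writing N(t) = Σ_{i=1}^k ⟨w(t), x_i⟩² and h(t) = ⟨ D/‖D‖ , s · P w(t)/‖P w(t)‖ ⟩, one has N'(t) = (2/n) N(t) ( √k ‖D‖ h(t) − N(t)/p ) for all t ≥ 0. -/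
open scoped RealInnerProductSpace

/-- For the decoupled single-neuron dynamics on orthonormal data
with outputs of sign `s`, the squared active norm `N(t) = Σ_i ⟪w(t),x_i⟫²` satisfies
`N' = (2/n) N (√k ‖D‖ h - N/p)`, where `h` is the alignment with `D̄`. -/
theorem active_norm_dynamics
    (d k n p : ℕ) (hk : 1 ≤ k) (hn : 1 ≤ n) (hp : 1 ≤ p)
    (s : ℝ) (hs : s = 1 ∨ s = -1)
    (x : Fin k → EuclideanSpace ℝ (Fin d)) (hx : Orthonormal ℝ x)
    (y : Fin k → ℝ) (hy : ∀ i, 0 < s * y i)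
    (D : EuclideanSpace ℝ (Fin d))
    (hD : D = (1 / Real.sqrt k) • ∑ i, y i • x i)
    (w : ℝ → EuclideanSpace ℝ (Fin d))
    (hwact : ∀ t, 0 ≤ t → ∀ i, 0 < ⟪w t, x i⟫)
    (aNeuron : ℝ → ℝ)
    (haNeuron : ∀ t, aNeuron t = s * Real.sqrt (∑ i, ⟪w t, x i⟫ ^ 2))
    (r : Fin k → ℝ → ℝ)
    (hr : ∀ i t, r i t = y i - (aNeuron t / (p : ℝ)) * ⟪w t, x i⟫)
    (hw : ∀ t, 0 ≤ t →
      HasDerivAt w ((aNeuron t / (n : ℝ)) • ∑ i, r i t • x i) t)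
    (Pw : ℝ → EuclideanSpace ℝ (Fin d))
    (hPw : ∀ t, Pw t =
      (Submodule.orthogonalProjection (Submodule.span ℝ (Set.range x)) (w t) :
        EuclideanSpace ℝ (Fin d)))
    (h : ℝ → ℝ)
    (hh : ∀ t, h t = ⟪‖D‖⁻¹ • D, s • ‖Pw t‖⁻¹ • Pw t⟫)
    (N : ℝ → ℝ)
    (hN : ∀ t, N t = ∑ i, ⟪w t, x i⟫ ^ 2) :
    ∀ t, 0 ≤ t →
      HasDerivAt N
        ((2 / (n : ℝ)) * N t * (Real.sqrt k * ‖D‖ * h t - N t / (p : ℝ))) t := by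
  intro t ht
  have hs2 : s ^ 2 = 1 := by rcases hs with h' | h' <;> simp [h']
  have hsne : s ≠ 0 := by rcases hs with h' | h' <;> simp [h']
  have hc : ∀ i, 0 < ⟪w t, x i⟫ := hwact t ht
  -- positivity of N t
  have hNpos : 0 < N t := by
    rw [hN]
    refine Finset.sum_pos (fun i _ => pow_pos (hc i) 2) ⟨⟨0, hk⟩, Finset.mem_univ _⟩
  -- a² = N
  have ha2 : aNeuron t ^ 2 = N t := by
    rw [haNeuron, mul_pow, hs2, one_mul, Real.sq_sqrt (by rw [hN t] at hNpos; positivity),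
      hN]
  -- orthonormality: inner of sum with x i
  have hinner_sum : ∀ (l : Fin k → ℝ) (i : Fin k), ⟪∑ j, l j • x j, x i⟫ = l i := by
    intro l i
    simpa using hx.inner_left_fintype l i
  -- derivative of each coordinate
  have hderiv : HasDerivAt N (∑ i, 2 * ⟪w t, x i⟫ * (aNeuron t / (n : ℝ) * r i t)) t := by
    have : HasDerivAt (fun τ => ∑ i, ⟪w τ, x i⟫ ^ 2)
        (∑ i, 2 * ⟪w t, x i⟫ * (aNeuron t / (n : ℝ) * r i t)) t := by
      refine HasDerivAt.fun_sum fun i _ => ?_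
      have h1 : HasDerivAt (fun τ => ⟪w τ, x i⟫)
          (aNeuron t / (n : ℝ) * r i t) t := by
        have h0 := (hw t ht).inner (𝕜 := ℝ) (hasDerivAt_const t (x i))
        have heq : ⟪w t, (0 : EuclideanSpace ℝ (Fin d))⟫ + ⟪((aNeuron t / (n : ℝ)) •
              ∑ j, r j t • x j : EuclideanSpace ℝ (Fin d)), x i⟫
            = aNeuron t / (n : ℝ) * r i t := by
          rw [real_inner_smul_left, hinner_sum, inner_zero_right, zero_add]
        exact heq ▸ h0
      have := h1.fun_pow 2
      simpa [mul_comm, mul_assoc, mul_left_comm] using this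
    exact this.congr_of_eventuallyEq (by filter_upwards with τ using (hN τ))
  -- the projection equals the explicit sum
  have hPwt : Pw t = ∑ i, ⟪w t, x i⟫ • x i := by
    rw [hPw]
    refine Submodule.eq_starProjection_of_mem_of_inner_eq_zero ?_ ?_
    · exact Submodule.sum_mem _ fun i _ =>
        Submodule.smul_mem _ _ (Submodule.subset_span ⟨i, rfl⟩)
    · intro u hu
      induction hu using Submodule.span_induction with
      | mem u hu =>
        obtain ⟨j, rfl⟩ := hu
        rw [inner_sub_left, hinner_sum, sub_self]
      | zero => simp
      | add u v _ _ h1 h2 => rw [inner_add_right, h1, h2, add_zero]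
      | smul c u _ h1 => rw [real_inner_smul_right, h1, mul_zero]
  -- norm of Pw
  have hPwnorm : ‖Pw t‖ = Real.sqrt (N t) := by
    have h2 : ‖Pw t‖ ^ 2 = N t := by
      rw [← real_inner_self_eq_norm_sq, hPwt, hx.inner_sum, hN]
      simp [pow_two]
    rw [← h2, Real.sqrt_sq (norm_nonneg _)]
  -- D is nonzero
  have hkpos : (0 : ℝ) < Real.sqrt k := Real.sqrt_pos.2 (by exact_mod_cast hk)
  have hDne : ‖D‖ ≠ 0 := by
    have hi0 : ⟪D, x ⟨0, hk⟩⟫ ≠ 0 := by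
      rw [hD, real_inner_smul_left, hinner_sum]
      have hy0 : y ⟨0, hk⟩ ≠ 0 := fun hz => by simpa [hz] using hy ⟨0, hk⟩
      positivity
    intro hz
    rw [norm_eq_zero] at hz
    simp [hz] at hi0
  -- inner product of D with Pw
  set A : ℝ := ∑ i, y i * ⟪w t, x i⟫ with hA
  have hDPw : ⟪D, Pw t⟫ = (1 / Real.sqrt k) * A := by
    rw [hD, hPwt, real_inner_smul_left, hx.inner_sum]
    simp [hA]
  -- value of h
  have hht : Real.sqrt k * ‖D‖ * h t = s * (Real.sqrt (N t))⁻¹ * A := by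
    rw [hh, real_inner_smul_left, real_inner_smul_right, real_inner_smul_right, hDPw,
      hPwnorm]
    field_simp
  -- final algebra
  have key : (∑ i, 2 * ⟪w t, x i⟫ * (aNeuron t / (n : ℝ) * r i t))
      = (2 / (n : ℝ)) * N t * (Real.sqrt k * ‖D‖ * h t - N t / (p : ℝ)) := by
    have hsum : (∑ i, 2 * ⟪w t, x i⟫ * (aNeuron t / (n : ℝ) * r i t))
        = (2 / (n : ℝ)) * (aNeuron t * A - aNeuron t ^ 2 / (p : ℝ) * N t) := by
      simp only [hr, hA, hN, Finset.mul_sum, mul_sub, ← Finset.sum_sub_distrib]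
      refine Finset.sum_congr rfl fun i _ => ?_
      ring
    rw [hsum, hht]
    have haN : aNeuron t = s * Real.sqrt (N t) := by rw [haNeuron, ← hN]
    have hsq : Real.sqrt (N t) * Real.sqrt (N t) = N t := Real.mul_self_sqrt hNpos.le
    have hsqne : Real.sqrt (N t) ≠ 0 := (Real.sqrt_pos.2 hNpos).ne'
    rw [ha2, haN]
    have hNinv : N t * (Real.sqrt (N t))⁻¹ = Real.sqrt (N t) := by
      rw [eq_comm, eq_mul_inv_iff_mul_eq₀ hsqne, hsq]
    have hkey : N t * (s * (Real.sqrt (N t))⁻¹ * A) = s * Real.sqrt (N t) * A := by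
      rw [mul_comm s, mul_assoc, ← mul_assoc (N t), hNinv]; ring
    linear_combination (-(2 / (n : ℝ))) * hkey
  exact key ▸ hderiv
end

section
/- Let d, n, p ≥ 1, x_1, …, x_n ∈ ℝ^d, y_1, …, y_n ∈ ℝ, and let I ⊆ ℝ be an open interval. Let a_j : I → ℝ and w_j : I → ℝ^d (j = 1,…,p) be differentiable and satisfy on I the gradient-flow equations w_j'(t) = (a_j(t)/n) Σ_{i=1}^n r_i(t) x_i 𝟙[⟨w_j(t), x_i⟩ > 0] and a_j'(t) = (1/n) Σ_{i=1}^n r_i(t) max(⟨w_j(t), x_i⟩, 0), where r_i(t) = y_i − (1/p) Σ_{k=1}^p a_k(t) max(⟨w_k(t), x_i⟩, 0). Assume that for every i, j the sign of ⟨w_j(t), x_i⟩ (positive, zero, or negative) does not depend on t ∈ I. Let X ∈ ℝ^{d×n} have columns x_i, let P_j be the diagonal matrix with entries 𝟙[⟨w_j(t), x_i⟩ > 0] (constant on I), let R(t) = (r_1(t),…,r_n(t)), and let M(t) = (1/p) Σ_{j=1}^p [ P_j Xᵀ w_j(t) w_j(t)ᵀ X P_j + a_j(t)² P_j XᵀX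 P_j ]. Then for every t ∈ I: R'(t) = −(1/n) M(t) R(t); the loss L(t) = (1/(2n)) ‖R(t)‖² satisfies L'(t) = −(1/n²) R(t)ᵀ M(t) R(t); and if R(t) ≠ 0 then −L'(t)/L(t) = (2/n) R̄(t)ᵀ M(t) R̄(t), where R̄(t) = R(t)/‖R(t)‖. -/
open scoped RealInnerProductSpace
open Matrix

private lemma aux_max_deriv {d n p : ℕ}
    (x : Fin n → EuclideanSpace ℝ (Fin d))
    {I : Set ℝ} (hIopen : IsOpen I)
    (a : Fin p → ℝ → ℝ) (w : Fin p → ℝ → EuclideanSpace ℝ (Fin d))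
    (r : Fin n → ℝ → ℝ)
    (hw : ∀ j, ∀ t ∈ I,
      HasDerivAt (w j)
        ((a j t / (n : ℝ)) • ∑ i, (if 0 < ⟪w j t, x i⟫ then r i t else 0) • x i) t)
    (hsign : ∀ i j, ∀ t ∈ I, ∀ t' ∈ I,
      Real.sign ⟪w j t, x i⟫ = Real.sign ⟪w j t', x i⟫)
    {t : ℝ} (ht : t ∈ I) (j : Fin p) (i : Fin n) :
    HasDerivAt (fun s => max (⟪w j s, x i⟫) 0)
      ((if 0 < ⟪w j t, x i⟫ then (1:ℝ) else 0) *
        ⟪(a j t / (n : ℝ)) • ∑ i', (if 0 < ⟪w j t, x i'⟫ then r i' t else 0) • x i', x i⟫) t := by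
  have base : HasDerivAt (fun s => ⟪w j s, x i⟫)
      (⟪(a j t / (n : ℝ)) • ∑ i', (if 0 < ⟪w j t, x i'⟫ then r i' t else 0) • x i', x i⟫) t := by
    simpa using (hw j t ht).inner ℝ (hasDerivAt_const t (x i))
  rcases lt_trichotomy (0:ℝ) (⟪w j t, x i⟫) with h | h | h
  · have hposI : ∀ t' ∈ I, 0 < ⟪w j t', x i⟫ := by
      intro t' ht'
      have hs := hsign i j t' ht' t ht
      rw [Real.sign_of_pos h] at hs
      rcases lt_trichotomy (⟪w j t', x i⟫) 0 with hc | hc | hc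
      · rw [Real.sign_of_neg hc] at hs; norm_num at hs
      · rw [hc, Real.sign_zero] at hs; norm_num at hs
      · exact hc
    have hev : (fun s => max (⟪w j s, x i⟫) 0) =ᶠ[nhds t] fun s => ⟪w j s, x i⟫ :=
      Filter.eventuallyEq_of_mem (hIopen.mem_nhds ht)
        (fun t' ht' => max_eq_left (hposI t' ht').le)
    rw [if_pos h, one_mul]
    exact base.congr_of_eventuallyEq hev
  · have hzI : ∀ t' ∈ I, ⟪w j t', x i⟫ = 0 := by
      intro t' ht'
      have hs := hsign i j t' ht' t ht
      rw [← h, Real.sign_zero] at hs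
      exact Real.sign_eq_zero_iff.mp hs
    have hev : (fun s => max (⟪w j s, x i⟫) 0) =ᶠ[nhds t] fun _ => (0:ℝ) :=
      Filter.eventuallyEq_of_mem (hIopen.mem_nhds ht)
        (fun t' ht' => by rw [hzI t' ht', max_self])
    have hnp : ¬ (0:ℝ) < ⟪w j t, x i⟫ := by rw [← h]; exact lt_irrefl 0
    rw [if_neg hnp, zero_mul]
    exact (hasDerivAt_const t (0:ℝ)).congr_of_eventuallyEq hev
  · have hnI : ∀ t' ∈ I, ⟪w j t', x i⟫ < 0 := by
      intro t' ht'
      have hs := hsign i j t' ht' t ht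
      rw [Real.sign_of_neg h] at hs
      rcases lt_trichotomy (⟪w j t', x i⟫) 0 with hc | hc | hc
      · exact hc
      · rw [hc, Real.sign_zero] at hs; norm_num at hs
      · rw [Real.sign_of_pos hc] at hs; norm_num at hs
    have hev : (fun s => max (⟪w j s, x i⟫) 0) =ᶠ[nhds t] fun _ => (0:ℝ) :=
      Filter.eventuallyEq_of_mem (hIopen.mem_nhds ht)
        (fun t' ht' => max_eq_right (hnI t' ht').le)
    rw [if_neg (asymm h), zero_mul]
    exact (hasDerivAt_const t (0:ℝ)).congr_of_eventuallyEq hev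

private lemma aux_identity {d n p : ℕ}
    (x : Fin n → EuclideanSpace ℝ (Fin d))
    (a : Fin p → ℝ → ℝ) (w : Fin p → ℝ → EuclideanSpace ℝ (Fin d))
    (r : Fin n → ℝ → ℝ)
    (M : ℝ → Matrix (Fin n) (Fin n) ℝ)
    (hM : ∀ t i i', M t i i' = (1 / (p : ℝ)) *
      ∑ j, ((if 0 < ⟪w j t, x i⟫ then 1 else 0) * ⟪x i, w j t⟫ * ⟪x i', w j t⟫ *
              (if 0 < ⟪w j t, x i'⟫ then 1 else 0) +
            (a j t) ^ 2 * (if 0 < ⟪w j t, x i⟫ then 1 else 0) * ⟪x i, x i'⟫ *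
              (if 0 < ⟪w j t, x i'⟫ then 1 else 0)))
    (t : ℝ) (i : Fin n) :
    -((1 / (p:ℝ)) * ∑ k, (((1 / (n:ℝ)) * ∑ i', r i' t * max (⟪w k t, x i'⟫) 0) * max (⟪w k t, x i⟫) 0 +
        a k t * ((if 0 < ⟪w k t, x i⟫ then (1:ℝ) else 0) *
          ((a k t / (n:ℝ)) * ∑ i', (if 0 < ⟪w k t, x i'⟫ then r i' t else 0) * ⟪x i', x i⟫))))
      = (-(1 : ℝ) / n) * (M t).mulVec (fun i' => r i' t) i := by
  have hmax : ∀ u : ℝ, max u 0 = (if 0 < u then (1:ℝ) else 0) * u := by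
    intro u
    rcases le_or_gt u 0 with h | h
    · rw [max_eq_right h, if_neg (not_lt_of_ge h), zero_mul]
    · rw [max_eq_left h.le, if_pos h, one_mul]
  have hif : ∀ (c : Prop) [Decidable c] (i' : Fin n),
      (if c then r i' t else 0) = (if c then (1:ℝ) else 0) * r i' t := by
    intro c _ i'; split <;> simp
  simp only [Matrix.mulVec, dotProduct, hM, hmax]
  simp only [hif, Finset.mul_sum, Finset.sum_mul, mul_add, add_mul, neg_add]
  rw [Finset.sum_comm]
  rw [← Finset.sum_neg_distrib]
  refine Finset.sum_congr rfl fun k _ => ?_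
  rw [neg_add, ← Finset.sum_neg_distrib, ← Finset.sum_neg_distrib, ← Finset.sum_add_distrib]
  refine Finset.sum_congr rfl fun i' _ => ?_
  rw [real_inner_comm (x i) (w k t), real_inner_comm (x i') (w k t), real_inner_comm (x i') (x i)]
  ring

/-- On an open interval where the activation pattern is constant,
the residual vector evolves linearly, `R' = -(1/n) M R`, the loss
`L = (1/2n)‖R‖²` satisfies `L' = -(1/n²) RᵀMR`, and the local PL curvature is
`-L'/L = (2/n) R̄ᵀMR̄`. -/
theorem residual_dynamics_constant_activation
    (d n p : ℕ) (hd : 1 ≤ d) (hn : 1 ≤ n) (hp : 1 ≤ p)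
    (x : Fin n → EuclideanSpace ℝ (Fin d)) (y : Fin n → ℝ)
    (I : Set ℝ) (hIopen : IsOpen I) (hIconn : I.OrdConnected)
    (a : Fin p → ℝ → ℝ) (w : Fin p → ℝ → EuclideanSpace ℝ (Fin d))
    (r : Fin n → ℝ → ℝ)
    (hr : ∀ i t, r i t = y i - (1 / (p : ℝ)) * ∑ k, a k t * max (⟪w k t, x i⟫) 0)
    (hw : ∀ j, ∀ t ∈ I,
      HasDerivAt (w j)
        ((a j t / (n : ℝ)) • ∑ i, (if 0 < ⟪w j t, x i⟫ then r i t else 0) • x i) t)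
    (ha : ∀ j, ∀ t ∈ I,
      HasDerivAt (a j) ((1 / (n : ℝ)) * ∑ i, r i t * max (⟪w j t, x i⟫) 0) t)
    (hsign : ∀ i j, ∀ t ∈ I, ∀ t' ∈ I,
      Real.sign ⟪w j t, x i⟫ = Real.sign ⟪w j t', x i⟫)
    (M : ℝ → Matrix (Fin n) (Fin n) ℝ)
    (hM : ∀ t i i', M t i i' = (1 / (p : ℝ)) *
      ∑ j, ((if 0 < ⟪w j t, x i⟫ then 1 else 0) * ⟪x i, w j t⟫ * ⟪x i', w j t⟫ *
              (if 0 < ⟪w j t, x i'⟫ then 1 else 0) +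
            (a j t) ^ 2 * (if 0 < ⟪w j t, x i⟫ then 1 else 0) * ⟪x i, x i'⟫ *
              (if 0 < ⟪w j t, x i'⟫ then 1 else 0)))
    (L : ℝ → ℝ) (hL : ∀ t, L t = (1 / (2 * (n : ℝ))) * ∑ i, r i t ^ 2) :
    ∀ t ∈ I,
      (∀ i, HasDerivAt (r i) ((-(1 : ℝ) / n) * (M t).mulVec (fun i' => r i' t) i) t) ∧
      HasDerivAt L ((-(1 : ℝ) / (n : ℝ) ^ 2) *
        dotProduct (fun i => r i t) ((M t).mulVec fun i' => r i' t)) t ∧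
      ((fun i => r i t) ≠ 0 →
        -((-(1 : ℝ) / (n : ℝ) ^ 2) *
            dotProduct (fun i => r i t) ((M t).mulVec fun i' => r i' t)) / L t =
          (2 / (n : ℝ)) *
            dotProduct (fun i => r i t / Real.sqrt (∑ i', r i' t ^ 2))
              ((M t).mulVec fun i' => r i' t / Real.sqrt (∑ i'', r i'' t ^ 2))) := by
  intro t ht
  have hn0 : (n:ℝ) ≠ 0 := Nat.cast_ne_zero.mpr (by omega)
  -- derivative of each residual, raw form
  have hrd : ∀ i, HasDerivAt (r i)
      (-((1 / (p:ℝ)) * ∑ k, (((1 / (n:ℝ)) * ∑ i', r i' t * max (⟪w k t, x i'⟫) 0) * max (⟪w k t, x i⟫) 0 +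
        a k t * ((if 0 < ⟪w k t, x i⟫ then (1:ℝ) else 0) *
          ⟪(a k t / (n:ℝ)) • ∑ i', (if 0 < ⟪w k t, x i'⟫ then r i' t else 0) • x i', x i⟫)))) t := by
    intro i
    have h1 : HasDerivAt (fun s => y i - (1 / (p:ℝ)) * ∑ k, a k s * max (⟪w k s, x i⟫) 0)
        (-((1 / (p:ℝ)) * ∑ k, (((1 / (n:ℝ)) * ∑ i', r i' t * max (⟪w k t, x i'⟫) 0) * max (⟪w k t, x i⟫) 0 +
          a k t * ((if 0 < ⟪w k t, x i⟫ then (1:ℝ) else 0) *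
            ⟪(a k t / (n:ℝ)) • ∑ i', (if 0 < ⟪w k t, x i'⟫ then r i' t else 0) • x i', x i⟫)))) t :=
      HasDerivAt.const_sub _
        ((HasDerivAt.fun_sum (fun k _ =>
          (ha k t ht).mul (aux_max_deriv x hIopen a w r hw hsign ht k i))).const_mul _)
    exact h1.congr_of_eventuallyEq (Filter.Eventually.of_forall fun s => hr i s)
  have hV : ∀ k i, ⟪(a k t / (n:ℝ)) • ∑ i', (if 0 < ⟪w k t, x i'⟫ then r i' t else 0) • x i', x i⟫
      = (a k t / (n:ℝ)) * ∑ i', (if 0 < ⟪w k t, x i'⟫ then r i' t else 0) * ⟪x i', x i⟫ := by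
    intro k i
    simp only [real_inner_smul_left, sum_inner]
  have hrd' : ∀ i, HasDerivAt (r i)
      ((-(1 : ℝ) / n) * (M t).mulVec (fun i' => r i' t) i) t := by
    intro i
    have := hrd i
    simp only [hV] at this
    exact (aux_identity x a w r M hM t i) ▸ this
  refine ⟨hrd', ?_, ?_⟩
  · -- loss derivative
    have h2 : HasDerivAt (fun s => (1 / (2 * (n:ℝ))) * ∑ i, r i s ^ 2)
        ((1 / (2 * (n:ℝ))) * ∑ i, ((2:ℕ) * r i t ^ (2-1) *
          ((-(1 : ℝ) / n) * (M t).mulVec (fun i' => r i' t) i))) t :=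
      (HasDerivAt.fun_sum (fun i _ => (hrd' i).pow 2)).const_mul _
    have h3 : HasDerivAt L ((1 / (2 * (n:ℝ))) * ∑ i, ((2:ℕ) * r i t ^ (2-1) *
        ((-(1 : ℝ) / n) * (M t).mulVec (fun i' => r i' t) i))) t :=
      h2.congr_of_eventuallyEq (Filter.Eventually.of_forall fun s => hL s)
    have hval : (1 / (2 * (n:ℝ))) * ∑ i, ((2:ℕ) * r i t ^ (2-1) *
        ((-(1 : ℝ) / n) * (M t).mulVec (fun i' => r i' t) i))
        = (-(1 : ℝ) / (n : ℝ) ^ 2) *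
          dotProduct (fun i => r i t) ((M t).mulVec fun i' => r i' t) := by
      simp only [dotProduct, pow_one, Nat.cast_ofNat]
      rw [Finset.mul_sum, Finset.mul_sum]
      refine Finset.sum_congr rfl fun i _ => ?_
      field_simp
      ring
    exact hval ▸ h3
  · -- PL curvature ratio
    intro hne
    obtain ⟨i0, hi0⟩ := Function.ne_iff.mp hne
    have hi0' : r i0 t ≠ 0 := hi0
    have hS : 0 < ∑ i', r i' t ^ 2 :=
      Finset.sum_pos' (fun i _ => sq_nonneg _)
        ⟨i0, Finset.mem_univ _, by positivity⟩
    set S := ∑ i', r i' t ^ 2 with hSdef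
    set c := Real.sqrt S with hcdef
    have hc0 : c ≠ 0 := (Real.sqrt_pos.mpr hS).ne'
    have hcc : c * c = S := Real.mul_self_sqrt hS.le
    set Q := dotProduct (fun i => r i t) ((M t).mulVec fun i' => r i' t) with hQdef
    have hdot : dotProduct (fun i => r i t / c) ((M t).mulVec fun i' => r i' t / c)
        = Q / (c * c) := by
      simp only [hQdef, dotProduct, Matrix.mulVec]
      rw [Finset.sum_div]
      refine Finset.sum_congr rfl fun i _ => ?_
      have : ∑ i', M t i i' * (r i' t / c) = (∑ i', M t i i' * r i' t) / c := by
        rw [Finset.sum_div]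
        exact Finset.sum_congr rfl fun i' _ => (mul_div_assoc _ _ _).symm
      rw [this]
      field_simp
    rw [hdot, hL t, hcc, ← hSdef]
    field_simp
end
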